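/- arXiv:1310.7726 — 3 statements merged into one kernel-verified Lean document; each statement's English description precedes it below -/
import Mathlib

section
/- Fix reals b < c, α₁ > 0, α₂ > 0, γ₁, γ₂ with A := α₂·c + γ₂ < B := α₁·b + γ₁. Define φ : ℝ → ℝ by φ(u) = α₁·u + γ₁ for u ≤ b, φ(u) = (A·(u−b) − B·(u−c))/(c−b) for b < u < c, and φ(u) = α₂·u + γ₂ for u ≥ c; define β₀(V) := b + (V−B)·(c−b)/(A−B) and β₂(V) := (V−γ₂)/α₂. Let g : ℝ → ℝ be C¹ with g' ≥ 0 and set G(u) := ∫₀ᵘ g(φ(s)) ds. Let Q ⊆ ℝ² be open, let v : Q → ℝ be C² with A ≤ v ≤ B on Q, let λ : Q → ℝ be C¹ with ∂ₜλ ≥ 0 on Q, and define u := (1−λ)·(β₀∘v) + λ·(β₂∘v). Assume ∂ₜu(x,t) = ∂²ₓv(x,t) at every (x,t) ∈ Q, and set G*(x,t) := (1−λ(x,t))·G(β₀(v(x,t))) + λ(x,t)·G(β₂(v(x,t))). Then ∂ₜG*(x,t) ≤ g(v(x,t))·∂²ₓv(x,t) for every (x,t) ∈ Q. -/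
/-- Partial derivative in the second (time) variable. -/
noncomputable def pderivT (f : ℝ × ℝ → ℝ) (p : ℝ × ℝ) : ℝ :=
  deriv (fun t => f (p.1, t)) p.2

/-- Second partial derivative in the first (space) variable. -/
noncomputable def pderivXX (f : ℝ × ℝ → ℝ) (p : ℝ × ℝ) : ℝ :=
  deriv (deriv (fun x => f (x, p.2))) p.1

theorem stmt_3 (b c α₁ α₂ γ₁ γ₂ A B : ℝ) (hbc : b < c)
    (hα₁ : 0 < α₁) (hα₂ : 0 < α₂)
    (hA : A = α₂ * c + γ₂) (hB : B = α₁ * b + γ₁) (hAB : A < B)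
    (φ β₀ β₂ : ℝ → ℝ)
    (hφ1 : ∀ u, u ≤ b → φ u = α₁ * u + γ₁)
    (hφ0 : ∀ u, b < u → u < c → φ u = (A * (u - b) - B * (u - c)) / (c - b))
    (hφ2 : ∀ u, c ≤ u → φ u = α₂ * u + γ₂)
    (hβ₀ : ∀ V, β₀ V = b + (V - B) * (c - b) / (A - B))
    (hβ₂ : ∀ V, β₂ V = (V - γ₂) / α₂)
    (g : ℝ → ℝ) (hg : ContDiff ℝ 1 g) (hg' : ∀ x, 0 ≤ deriv g x)
    (G : ℝ → ℝ) (hG : ∀ u, G u = ∫ s in (0:ℝ)..u, g (φ s))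
    (Q : Set (ℝ × ℝ)) (hQ : IsOpen Q)
    (v lam : ℝ × ℝ → ℝ)
    (hv : ContDiffOn ℝ 2 v Q)
    (hvA : ∀ p ∈ Q, A ≤ v p) (hvB : ∀ p ∈ Q, v p ≤ B)
    (hlam : ContDiffOn ℝ 1 lam Q)
    (hlamt : ∀ p ∈ Q, 0 ≤ pderivT lam p)
    (u : ℝ × ℝ → ℝ)
    (hu : ∀ p, u p = (1 - lam p) * β₀ (v p) + lam p * β₂ (v p))
    (heq : ∀ p ∈ Q, pderivT u p = pderivXX v p)
    (Gstar : ℝ × ℝ → ℝ)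
    (hGstar : ∀ p, Gstar p = (1 - lam p) * G (β₀ (v p)) + lam p * G (β₂ (v p))) :
    ∀ p ∈ Q, pderivT Gstar p ≤ g (v p) * pderivXX v p := by
  have hcb : (0:ℝ) < c - b := by linarith
  have hABlt : A - B < 0 := by linarith
  have hABne : A - B ≠ 0 := ne_of_lt hABlt
  -- φ written as an explicit piecewise function
  have hφdef : φ = fun s => if s ≤ b then α₁ * s + γ₁ else
      if c ≤ s then α₂ * s + γ₂ else (A * (s - b) - B * (s - c)) / (c - b) := by
    funext s
    rcases le_or_gt s b with h | h
    · rw [if_pos h, hφ1 s h]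
    · rw [if_neg (not_le.2 h)]
      rcases le_or_gt c s with h2 | h2
      · rw [if_pos h2, hφ2 s h2]
      · rw [if_neg (not_le.2 h2), hφ0 s h h2]
  -- continuity of φ
  have hφcont : Continuous φ := by
    rw [hφdef]
    have hc1 : Continuous fun s : ℝ => α₁ * s + γ₁ :=
      (continuous_const.mul continuous_id).add continuous_const
    have hc2 : Continuous fun s : ℝ => α₂ * s + γ₂ :=
      (continuous_const.mul continuous_id).add continuous_const
    have hc0 : Continuous fun s : ℝ => (A * (s - b) - B * (s - c)) / (c - b) :=
      ((continuous_const.mul (continuous_id.sub continuous_const)).sub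
        (continuous_const.mul (continuous_id.sub continuous_const))).div_const _
    have hinner : Continuous fun s : ℝ =>
        if c ≤ s then α₂ * s + γ₂ else (A * (s - b) - B * (s - c)) / (c - b) := by
      apply Continuous.if_le hc2 hc0 continuous_const continuous_id
      intro s hs
      simp only [id] at hs
      rw [← hs, ← hA]
      field_simp
      ring
    apply Continuous.if_le hc1 hinner continuous_id continuous_const
    intro s hs
    simp only [id] at hs
    rw [hs]
    have hnc : ¬ c ≤ b := not_le.2 hbc
    rw [if_neg hnc, ← hB]
    field_simp
    ring
  -- monotonicity of g
  have hgmono : Monotone g := monotone_of_deriv_nonneg (hg.differentiable one_ne_zero) hg'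
  -- derivative of G
  have hGc : Continuous fun s => g (φ s) := (hg.continuous).comp hφcont
  have hGderiv : ∀ y, HasDerivAt G (g (φ y)) y := by
    intro y
    have h := (hGc.integral_hasStrictDerivAt 0 y).hasDerivAt
    have hfun : G = fun y => ∫ s in (0:ℝ)..y, g (φ s) := funext hG
    rw [hfun]; exact h
  -- β₀ lands in [b, c] and φ ∘ β₀ = id on [A, B]
  have hβ₀b : ∀ V, V ≤ B → b ≤ β₀ V := by
    intro V hV
    rw [hβ₀]
    have : 0 ≤ (V - B) * (c - b) / (A - B) := by
      rw [div_nonneg_iff]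
      exact Or.inr ⟨by nlinarith, hABlt.le⟩
    linarith
  have hβ₀c : ∀ V, A ≤ V → β₀ V ≤ c := by
    intro V hV
    rw [hβ₀]
    have hkey : b + (V - B) * (c - b) / (A - B) - c = (V - A) * (c - b) / (A - B) := by
      field_simp
      ring
    have : (V - A) * (c - b) / (A - B) ≤ 0 := by
      rw [div_nonpos_iff]
      exact Or.inl ⟨by nlinarith, hABlt.le⟩
    linarith
  have hβ₂c : ∀ V, A ≤ V → c ≤ β₂ V := by
    intro V hV
    rw [hβ₂]
    rw [le_div_iff₀ hα₂]
    nlinarith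
  have hφβ₀ : ∀ V, A ≤ V → V ≤ B → φ (β₀ V) = V := by
    intro V h1 h2
    rcases eq_or_lt_of_le h2 with hVB | hVB
    · have hb0 : β₀ V = b := by rw [hβ₀, hVB]; simp
      rw [hb0, hφ1 b le_rfl, ← hB, hVB]
    rcases eq_or_lt_of_le h1 with hVA | hVA
    · have hb0 : β₀ V = c := by
        rw [hβ₀, ← hVA]
        field_simp
        ring
      rw [hb0, hφ2 c le_rfl, ← hA, ← hVA]
    · have hlt1 : b < β₀ V := by
        rw [hβ₀]
        have : 0 < (V - B) * (c - b) / (A - B) := by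
          apply div_pos_of_neg_of_neg
          · nlinarith
          · linarith
        linarith
      have hlt2 : β₀ V < c := by
        rw [hβ₀]
        have hkey : b + (V - B) * (c - b) / (A - B) - c = (V - A) * (c - b) / (A - B) := by
          field_simp
          ring
        have : (V - A) * (c - b) / (A - B) < 0 := by
          apply div_neg_of_pos_of_neg
          · nlinarith
          · linarith
        linarith
      rw [hφ0 _ hlt1 hlt2, hβ₀]
      field_simp
      ring
  have hφβ₂ : ∀ V, A ≤ V → φ (β₂ V) = V := by
    intro V h1
    rw [hφ2 _ (hβ₂c V h1), hβ₂]
    field_simp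
    ring
  -- key pointwise bound : φ(s) ≤ V on [β₀ V, β₂ V]
  have hφle : ∀ V, A ≤ V → V ≤ B → ∀ s ∈ Set.Icc (β₀ V) (β₂ V), φ s ≤ V := by
    intro V h1 h2 s hs
    obtain ⟨hs1, hs2⟩ := hs
    have hbV := hβ₀b V h2
    rcases le_or_gt c s with hcs | hcs
    · -- right branch
      rw [hφ2 s hcs]
      have : s ≤ (V - γ₂) / α₂ := by rw [← hβ₂]; exact hs2
      rw [le_div_iff₀ hα₂] at this
      nlinarith
    rcases le_or_gt s b with hsb | hsb
    · -- forces s = b, β₀ V = b, V = B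
      have hsb' : s = b := le_antisymm hsb (hbV.trans hs1)
      have hbeq : β₀ V = b := le_antisymm (hs1.trans_eq hsb') hbV
      have hVB : V = B := by
        rw [hβ₀] at hbeq
        have : (V - B) * (c - b) / (A - B) = 0 := by linarith
        have h0 : (V - B) * (c - b) = 0 := by
          rcases div_eq_zero_iff.1 this with h | h
          · exact h
          · exact absurd h hABne
        have : V - B = 0 := by
          rcases mul_eq_zero.1 h0 with h | h
          · exact h
          · exact absurd h (ne_of_gt hcb)
        linarith
      rw [hφ1 s hsb, hsb', ← hB, hVB]
    · -- middle branch
      rw [hφ0 s hsb hcs]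
      rw [div_le_iff₀ hcb]
      have hs1' : b + (V - B) * (c - b) / (A - B) ≤ s := by rw [← hβ₀]; exact hs1
      have hm : (V - B) * (c - b) / (A - B) ≤ s - b := by linarith
      have hm2 : (s - b) * (A - B) ≤ (V - B) * (c - b) := by
        have := mul_le_mul_of_nonpos_right hm (le_of_lt hABlt)
        calc (s - b) * (A - B) ≤ (V - B) * (c - b) / (A - B) * (A - B) := this
          _ = (V - B) * (c - b) := by field_simp
      nlinarith
  -- key integral inequality
  have hkey : ∀ V, A ≤ V → V ≤ B → G (β₂ V) - G (β₀ V) ≤ g V * (β₂ V - β₀ V) := by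
    intro V h1 h2
    have hle : β₀ V ≤ β₂ V := (hβ₀c V h1).trans (hβ₂c V h1)
    have hInt : G (β₂ V) - G (β₀ V) = ∫ s in (β₀ V)..(β₂ V), g (φ s) := by
      rw [hG, hG]
      exact (intervalIntegral.integral_interval_sub_left
        (hGc.intervalIntegrable 0 (β₂ V)) (hGc.intervalIntegrable 0 (β₀ V)))
    rw [hInt]
    have hmono : (∫ s in (β₀ V)..(β₂ V), g (φ s)) ≤ ∫ _s in (β₀ V)..(β₂ V), g V := by
      apply intervalIntegral.integral_mono_on hle
        (hGc.intervalIntegrable _ _) (intervalIntegrable_const)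
      intro s hs
      exact hgmono (hφle V h1 h2 s hs)
    calc (∫ s in (β₀ V)..(β₂ V), g (φ s)) ≤ ∫ _s in (β₀ V)..(β₂ V), g V := hmono
      _ = g V * (β₂ V - β₀ V) := by
          rw [intervalIntegral.integral_const]
          simp [smul_eq_mul]
          ring
  -- main part: derivative computation at a point of Q
  intro p hp
  have hpQ : Q ∈ nhds p := hQ.mem_nhds hp
  have hvd : DifferentiableAt ℝ v p :=
    ((hv.differentiableOn (by norm_num)).differentiableAt hpQ)
  have hlamd : DifferentiableAt ℝ lam p :=
    ((hlam.differentiableOn one_ne_zero).differentiableAt hpQ)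
  have hcurve : ∀ t : ℝ, HasDerivAt (fun s : ℝ => ((p.1 : ℝ), s)) ((0 : ℝ), (1 : ℝ)) t := by
    intro t
    exact (hasDerivAt_const t p.1).prodMk (hasDerivAt_id t)
  have hpe : ((p.1 : ℝ), (p.2 : ℝ)) = p := Prod.mk.eta
  -- slice functions
  have hVd : DifferentiableAt ℝ (fun t => v (p.1, t)) p.2 := by
    have := hvd.comp p.2 ((hcurve p.2).differentiableAt)
    exact this
  have hLd : DifferentiableAt ℝ (fun t => lam (p.1, t)) p.2 := by
    have := hlamd.comp p.2 ((hcurve p.2).differentiableAt)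
    exact this
  set v' : ℝ := deriv (fun t => v (p.1, t)) p.2 with hv'
  set l' : ℝ := deriv (fun t => lam (p.1, t)) p.2 with hl'
  have hVt : HasDerivAt (fun t => v (p.1, t)) v' p.2 := hVd.hasDerivAt
  have hLt : HasDerivAt (fun t => lam (p.1, t)) l' p.2 := hLd.hasDerivAt
  have hl'nn : 0 ≤ l' := hlamt p hp
  have hvp : v (p.1, p.2) = v p := by rw [hpe]
  have hlamp : lam (p.1, p.2) = lam p := by rw [hpe]
  set k : ℝ := (c - b) / (A - B) with hkdef
  -- convenient forms of β₀ ∘ v-slice, β₂ ∘ v-slice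
  have hβ₀form : ∀ V, β₀ V = b + (V - B) * k := by
    intro V; rw [hβ₀, hkdef, mul_div_assoc]
  have h1L : HasDerivAt (fun t => 1 - lam (p.1, t)) (-l') p.2 := hLt.const_sub 1
  have hβ₀V : HasDerivAt (fun t => b + (v (p.1, t) - B) * k) (v' * k) p.2 :=
    ((hVt.sub_const B).mul_const k).const_add b
  have hβ₂V : HasDerivAt (fun t => (v (p.1, t) - γ₂) / α₂) (v' / α₂) p.2 :=
    (hVt.sub_const γ₂).div_const α₂
  -- derivative of the u-slice
  have hUslice : (fun t => u (p.1, t)) =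
      fun t => (1 - lam (p.1, t)) * (b + (v (p.1, t) - B) * k)
        + lam (p.1, t) * ((v (p.1, t) - γ₂) / α₂) := by
    funext t; rw [hu, hβ₀form, hβ₂]
  set u' : ℝ := -l' * (b + (v p - B) * k) + (1 - lam p) * (v' * k)
      + (l' * ((v p - γ₂) / α₂) + lam p * (v' / α₂)) with hu'def
  have hut : HasDerivAt (fun t => u (p.1, t)) u' p.2 := by
    rw [hUslice]
    have := (h1L.mul hβ₀V).add (hLt.mul hβ₂V)
    exact this
  have hpderivu : pderivT u p = u' := hut.deriv
  -- derivative of the Gstar-slice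
  have hgA : A ≤ v p := hvA p hp
  have hgB : v p ≤ B := hvB p hp
  have hGβ₀ : HasDerivAt (fun t => G (b + (v (p.1, t) - B) * k)) (g (v p) * (v' * k)) p.2 := by
    have hy : φ (b + (v (p.1, p.2) - B) * k) = v p := by
      rw [hvp, ← hβ₀form]; exact hφβ₀ (v p) hgA hgB
    have := (hGderiv (b + (v (p.1, p.2) - B) * k)).comp p.2 hβ₀V
    rw [hy] at this
    exact this
  have hGβ₂ : HasDerivAt (fun t => G ((v (p.1, t) - γ₂) / α₂)) (g (v p) * (v' / α₂)) p.2 := by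
    have hy : φ ((v (p.1, p.2) - γ₂) / α₂) = v p := by
      rw [hvp, ← hβ₂]; exact hφβ₂ (v p) hgA
    have := (hGderiv ((v (p.1, p.2) - γ₂) / α₂)).comp p.2 hβ₂V
    rw [hy] at this
    exact this
  have hGslice : (fun t => Gstar (p.1, t)) =
      fun t => (1 - lam (p.1, t)) * G (b + (v (p.1, t) - B) * k)
        + lam (p.1, t) * G ((v (p.1, t) - γ₂) / α₂) := by
    funext t; rw [hGstar, hβ₀form, hβ₂]
  set Gt' : ℝ := -l' * G (b + (v p - B) * k) + (1 - lam p) * (g (v p) * (v' * k))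
      + (l' * G ((v p - γ₂) / α₂) + lam p * (g (v p) * (v' / α₂))) with hGt'def
  have hGt : HasDerivAt (fun t => Gstar (p.1, t)) Gt' p.2 := by
    rw [hGslice]
    have := (h1L.mul hGβ₀).add (hLt.mul hGβ₂)
    exact this
  have hpderivG : pderivT Gstar p = Gt' := hGt.deriv
  -- put everything together
  have hy0 : β₀ (v p) = b + (v p - B) * k := hβ₀form (v p)
  have hy2 : β₂ (v p) = (v p - γ₂) / α₂ := hβ₂ (v p)
  have hbr : G ((v p - γ₂) / α₂) - G (b + (v p - B) * k)
      ≤ g (v p) * (((v p - γ₂) / α₂) - (b + (v p - B) * k)) := by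
    rw [← hy0, ← hy2]; exact hkey (v p) hgA hgB
  have hprod : 0 ≤ l' * (g (v p) * (((v p - γ₂) / α₂) - (b + (v p - B) * k))
      - (G ((v p - γ₂) / α₂) - G (b + (v p - B) * k))) :=
    mul_nonneg hl'nn (by linarith)
  have hring : Gt' - g (v p) * u' =
      -(l' * (g (v p) * (((v p - γ₂) / α₂) - (b + (v p - B) * k))
        - (G ((v p - γ₂) / α₂) - G (b + (v p - B) * k)))) := by
    rw [hGt'def, hu'def]; ring
  have hfinal : Gt' ≤ g (v p) * u' := by
    clear_value Gt' u'
    linarith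
  rw [hpderivG, ← heq p hp, hpderivu]
  exact hfinal
end

section
/- Let T > 0 and let c₁, c₂, c₃, c₄ > 0. Let m : [0,T] → ℝ be continuous with c₂ ≤ m(t) ≤ c₃ for all t, and let D : [0,T] → ℝ be differentiable with D(t) ≥ c₁ and |D'(t)| ≤ c₄ for all t. Define λ(t) := ( ∫₀ᵗ m(s) ds ) / D(t). Then λ'(t) ≥ 0 for every t ∈ [0, min(T, c₁·c₂/(c₃·c₄))]. In particular there exists T̄ > 0 such that λ' is nonnegative on [0,T̄]. -/
open Set intervalIntegral MeasureTheory

theorem stmt_7 (T c₁ c₂ c₃ c₄ : ℝ) (hT : 0 < T)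
    (hc₁ : 0 < c₁) (hc₂ : 0 < c₂) (hc₃ : 0 < c₃) (hc₄ : 0 < c₄)
    (m D D' : ℝ → ℝ)
    (hm : ContinuousOn m (Set.Icc 0 T))
    (hmlb : ∀ t ∈ Set.Icc (0:ℝ) T, c₂ ≤ m t)
    (hmub : ∀ t ∈ Set.Icc (0:ℝ) T, m t ≤ c₃)
    (hD : ∀ t ∈ Set.Icc (0:ℝ) T, HasDerivWithinAt D (D' t) (Set.Icc 0 T) t)
    (hDlb : ∀ t ∈ Set.Icc (0:ℝ) T, c₁ ≤ D t)
    (hD'b : ∀ t ∈ Set.Icc (0:ℝ) T, |D' t| ≤ c₄)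
    (lam : ℝ → ℝ) (hlam : ∀ t, lam t = (∫ s in (0:ℝ)..t, m s) / D t) :
    (∀ t ∈ Set.Icc (0:ℝ) (min T (c₁ * c₂ / (c₃ * c₄))),
      0 ≤ derivWithin lam (Set.Icc 0 T) t) ∧
    ∃ Tbar > (0:ℝ), ∀ t ∈ Set.Icc (0:ℝ) Tbar,
      0 ≤ derivWithin lam (Set.Icc 0 T) t := by
  have hstar : 0 < c₁ * c₂ / (c₃ * c₄) := by positivity
  have key : ∀ t ∈ Set.Icc (0:ℝ) (min T (c₁ * c₂ / (c₃ * c₄))),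
      0 ≤ derivWithin lam (Set.Icc 0 T) t := by
    intro t ht
    obtain ⟨ht0, ht1⟩ := ht
    have htT : t ≤ T := le_trans ht1 (min_le_left _ _)
    have hts : t ≤ c₁ * c₂ / (c₃ * c₄) := le_trans ht1 (min_le_right _ _)
    have htmem : t ∈ Set.Icc (0:ℝ) T := ⟨ht0, htT⟩
    haveI : Fact (t ∈ Set.Icc (0:ℝ) T) := ⟨htmem⟩
    -- integrability of m on [0, t]
    have hint : IntervalIntegrable m volume 0 t :=
      (hm.mono (by rw [Set.uIcc_of_le ht0]; exact Set.Icc_subset_Icc le_rfl htT)).intervalIntegrable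
    have hmeas : StronglyMeasurableAtFilter m (nhdsWithin t (Set.Icc 0 T)) volume :=
      hm.stronglyMeasurableAtFilter_nhdsWithin measurableSet_Icc t
    have hF : HasDerivWithinAt (fun u => ∫ s in (0:ℝ)..u, m s) (m t) (Set.Icc 0 T) t :=
      intervalIntegral.integral_hasDerivWithinAt_right hint hmeas (hm t htmem)
    have hDt : 0 < D t := lt_of_lt_of_le hc₁ (hDlb t htmem)
    have hDiv : HasDerivWithinAt lam
        ((m t * D t - (∫ s in (0:ℝ)..t, m s) * D' t) / (D t) ^ 2) (Set.Icc 0 T) t := by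
      have := hF.div (hD t htmem) (ne_of_gt hDt)
      exact this.congr (fun x _ => hlam x) (hlam t)
    have hud : UniqueDiffWithinAt ℝ (Set.Icc (0:ℝ) T) t :=
      uniqueDiffOn_Icc hT t htmem
    rw [hDiv.derivWithin hud]
    apply div_nonneg _ (by positivity)
    -- estimate the integral
    have hFub : (∫ s in (0:ℝ)..t, m s) ≤ c₃ * t := by
      calc (∫ s in (0:ℝ)..t, m s) ≤ ∫ s in (0:ℝ)..t, c₃ := by
            apply intervalIntegral.integral_mono_on ht0 hint intervalIntegrable_const
            intro s hs
            exact hmub s ⟨hs.1, le_trans hs.2 htT⟩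
        _ = c₃ * t := by simp [mul_comm]
    have hFlb : 0 ≤ (∫ s in (0:ℝ)..t, m s) := by
      apply intervalIntegral.integral_nonneg ht0
      intro s hs
      exact le_trans hc₂.le (hmlb s ⟨hs.1, le_trans hs.2 htT⟩)
    have h1 : (∫ s in (0:ℝ)..t, m s) * D' t ≤ c₃ * t * c₄ := by
      calc (∫ s in (0:ℝ)..t, m s) * D' t ≤ (∫ s in (0:ℝ)..t, m s) * c₄ :=
            mul_le_mul_of_nonneg_left (le_trans (le_abs_self _) (hD'b t htmem)) hFlb
        _ ≤ c₃ * t * c₄ := mul_le_mul_of_nonneg_right hFub hc₄.le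
    have h2 : c₃ * t * c₄ ≤ c₁ * c₂ := by
      have : t * (c₃ * c₄) ≤ c₁ * c₂ := by
        rw [← le_div_iff₀ (by positivity)]; exact hts
      nlinarith
    have h3 : c₁ * c₂ ≤ m t * D t := by
      nlinarith [hmlb t htmem, hDlb t htmem]
    linarith
  exact ⟨key, min T (c₁ * c₂ / (c₃ * c₄)), lt_min hT hstar, key⟩
end

section
/- Let σ ≠ 0, L > 0, N ∈ ℕ, and real coefficients a₀,…,a_N and f₀,…,f_N. Define c₀(t) := a₀ + f₀·t/|σ| and, for 1 ≤ k ≤ N, c_k(t) := ( a_k + f_k·L²/(k²π²) )·exp( k²π²·t/(L²|σ|) ) − f_k·L²/(k²π²). Define v(x,t) := Σ_{k=0}^{N} c_k(t)·cos(kπx/L). Then for all (x,t) ∈ ℝ²: |σ|·∂ₜv(x,t) + ∂²ₓv(x,t) = Σ_{k=0}^{N} f_k·cos(kπx/L); moreover v(x,0) = Σ_{k=0}^{N} a_k·cos(kπx/L) for all x, and ∂ₓv(0,t) = ∂ₓv(L,t) = 0 for all t. -/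
/-- Partial derivative in the first (space) variable. -/
noncomputable def pderivX (f : ℝ × ℝ → ℝ) (p : ℝ × ℝ) : ℝ :=
  deriv (fun x => f (x, p.2)) p.1

theorem stmt_11 (σ L : ℝ) (hσ : σ ≠ 0) (hL : 0 < L) (N : ℕ) (a f : ℕ → ℝ)
    (c : ℕ → ℝ → ℝ)
    (hc0 : ∀ t, c 0 t = a 0 + f 0 * t / |σ|)
    (hck : ∀ k, 1 ≤ k → k ≤ N → ∀ t, c k t =
      (a k + f k * L ^ 2 / ((k : ℝ) ^ 2 * Real.pi ^ 2)) *
          Real.exp ((k : ℝ) ^ 2 * Real.pi ^ 2 * t / (L ^ 2 * |σ|)) -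
        f k * L ^ 2 / ((k : ℝ) ^ 2 * Real.pi ^ 2))
    (v : ℝ × ℝ → ℝ)
    (hv : ∀ q : ℝ × ℝ, v q =
      ∑ k ∈ Finset.range (N + 1), c k q.2 * Real.cos ((k : ℝ) * Real.pi * q.1 / L)) :
    (∀ q : ℝ × ℝ, |σ| * pderivT v q + pderivXX v q =
      ∑ k ∈ Finset.range (N + 1), f k * Real.cos ((k : ℝ) * Real.pi * q.1 / L)) ∧
    (∀ x : ℝ, v (x, 0) =
      ∑ k ∈ Finset.range (N + 1), a k * Real.cos ((k : ℝ) * Real.pi * x / L)) ∧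
    (∀ t : ℝ, pderivX v (0, t) = 0 ∧ pderivX v (L, t) = 0) := by
  have hL0 : L ≠ 0 := ne_of_gt hL
  have hσ0 : |σ| ≠ 0 := abs_ne_zero.mpr hσ
  have hπ : Real.pi ≠ 0 := Real.pi_ne_zero
  -- derivative of c k
  have hcderiv : ∀ k ∈ Finset.range (N + 1), ∀ t : ℝ,
      HasDerivAt (c k) (|σ|⁻¹ * (f k + ((k : ℝ) * Real.pi / L) ^ 2 * c k t)) t := by
    intro k hk t
    rw [Finset.mem_range, Nat.lt_succ_iff] at hk
    rcases Nat.eq_zero_or_pos k with rfl | hk1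
    · have e : c 0 = fun t => a 0 + f 0 * t / |σ| := funext hc0
      rw [e]
      have h := (((hasDerivAt_id t).const_mul (f 0)).div_const |σ|).const_add (a 0)
      refine h.congr_deriv ?_
      simp
      ring
    · have hk0 : (k : ℝ) ≠ 0 := Nat.cast_ne_zero.mpr hk1.ne'
      have e : c k = fun t => (a k + f k * L ^ 2 / ((k : ℝ) ^ 2 * Real.pi ^ 2)) *
          Real.exp ((k : ℝ) ^ 2 * Real.pi ^ 2 * t / (L ^ 2 * |σ|)) -
          f k * L ^ 2 / ((k : ℝ) ^ 2 * Real.pi ^ 2) := funext (hck k hk1 hk)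
      rw [hck k hk1 hk t, e]
      have h1 : HasDerivAt (fun s : ℝ => (k : ℝ) ^ 2 * Real.pi ^ 2 * s / (L ^ 2 * |σ|))
          ((k : ℝ) ^ 2 * Real.pi ^ 2 / (L ^ 2 * |σ|)) t := by
        simpa using ((hasDerivAt_id t).const_mul ((k : ℝ) ^ 2 * Real.pi ^ 2)).div_const
          (L ^ 2 * |σ|)
      have h2 := (h1.exp.const_mul (a k + f k * L ^ 2 / ((k : ℝ) ^ 2 * Real.pi ^ 2))).sub_const
        (f k * L ^ 2 / ((k : ℝ) ^ 2 * Real.pi ^ 2))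
      refine h2.congr_deriv ?_
      field_simp
      ring
  -- derivative of cosine terms
  have hcos : ∀ (k : ℕ) (x : ℝ),
      HasDerivAt (fun y => Real.cos ((k : ℝ) * Real.pi * y / L))
        (-((k : ℝ) * Real.pi / L) * Real.sin ((k : ℝ) * Real.pi * x / L)) x := by
    intro k x
    have h := ((hasDerivAt_id x).const_mul ((k : ℝ) * Real.pi / L)).cos
    have e : (fun y : ℝ => Real.cos ((k : ℝ) * Real.pi * y / L)) =
        fun y => Real.cos ((k : ℝ) * Real.pi / L * y) := by
      funext y; ring_nf
    rw [e, show (k : ℝ) * Real.pi * x / L = (k : ℝ) * Real.pi / L * x from by ring]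
    simpa [mul_comm] using h
  have hsin : ∀ (k : ℕ) (x : ℝ),
      HasDerivAt (fun y => Real.sin ((k : ℝ) * Real.pi * y / L))
        (((k : ℝ) * Real.pi / L) * Real.cos ((k : ℝ) * Real.pi * x / L)) x := by
    intro k x
    have h := ((hasDerivAt_id x).const_mul ((k : ℝ) * Real.pi / L)).sin
    have e : (fun y : ℝ => Real.sin ((k : ℝ) * Real.pi * y / L)) =
        fun y => Real.sin ((k : ℝ) * Real.pi / L * y) := by
      funext y; ring_nf
    rw [e, show (k : ℝ) * Real.pi * x / L = (k : ℝ) * Real.pi / L * x from by ring]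
    simpa [mul_comm] using h
  -- first space derivative
  have hX : ∀ (t x : ℝ), HasDerivAt (fun y => v (y, t))
      (∑ k ∈ Finset.range (N + 1),
        c k t * (-((k : ℝ) * Real.pi / L) * Real.sin ((k : ℝ) * Real.pi * x / L))) x := by
    intro t x
    have e : (fun y => v (y, t)) = fun y => ∑ k ∈ Finset.range (N + 1),
        c k t * Real.cos ((k : ℝ) * Real.pi * y / L) := funext fun y => hv (y, t)
    rw [e]
    exact HasDerivAt.fun_sum fun k _ => (hcos k x).const_mul (c k t)
  have hXfun : ∀ t : ℝ, deriv (fun y => v (y, t)) = fun x =>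
      ∑ k ∈ Finset.range (N + 1),
        c k t * (-((k : ℝ) * Real.pi / L) * Real.sin ((k : ℝ) * Real.pi * x / L)) :=
    fun t => funext fun x => (hX t x).deriv
  refine ⟨?_, ?_, ?_⟩
  · rintro ⟨x, t⟩
    have hTd : pderivT v (x, t) = ∑ k ∈ Finset.range (N + 1),
        (|σ|⁻¹ * (f k + ((k : ℝ) * Real.pi / L) ^ 2 * c k t)) *
          Real.cos ((k : ℝ) * Real.pi * x / L) := by
      show deriv (fun s => v (x, s)) t = _
      have e : (fun s => v (x, s)) = fun s => ∑ k ∈ Finset.range (N + 1),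
          c k s * Real.cos ((k : ℝ) * Real.pi * x / L) := funext fun s => hv (x, s)
      rw [e]
      exact (HasDerivAt.fun_sum fun k hk => (hcderiv k hk t).mul_const _).deriv
    have hXXd : pderivXX v (x, t) = ∑ k ∈ Finset.range (N + 1),
        c k t * (-((k : ℝ) * Real.pi / L) *
          (((k : ℝ) * Real.pi / L) * Real.cos ((k : ℝ) * Real.pi * x / L))) := by
      show deriv (deriv (fun y => v (y, t))) x = _
      rw [hXfun t]
      exact (HasDerivAt.fun_sum fun k _ =>
        ((hsin k x).const_mul (-((k : ℝ) * Real.pi / L))).const_mul (c k t)).deriv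
    rw [hTd, hXXd, Finset.mul_sum, ← Finset.sum_add_distrib]
    refine Finset.sum_congr rfl fun k _ => ?_
    field_simp
    ring
  · intro x
    rw [hv (x, 0)]
    refine Finset.sum_congr rfl fun k hk => ?_
    rw [Finset.mem_range, Nat.lt_succ_iff] at hk
    rcases Nat.eq_zero_or_pos k with rfl | hk1
    · rw [hc0]; simp
    · rw [hck k hk1 hk]; simp
  · intro t
    constructor
    · show deriv (fun y => v (y, t)) 0 = 0
      rw [(hX t 0).deriv]
      refine Finset.sum_eq_zero fun k _ => ?_
      simp
    · show deriv (fun y => v (y, t)) L = 0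
      rw [(hX t L).deriv]
      refine Finset.sum_eq_zero fun k _ => ?_
      simp [mul_div_assoc, div_self hL0, Real.sin_nat_mul_pi]
end
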